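/- Let (P,⪰) be a finite poset on {p_1,…,p_n} and K a field. Then the Hibi ideal H_P ⊂ S = K[x_1,…,x_n,y_1,…,y_n] has linear quotients. (This is the case k = 0 of the paper's Corollary 4.5.) -/

import Mathlib

open Finset MvPolynomial

/-- The Hibi generator `u_𝓙 = (∏_{q∈𝓙} x_q)(∏_{q∉𝓙} y_q)` attached to a subset `𝓙` of a
finite set `Q`, in the polynomial ring on the variables `x_q = Sum.inl q`,
`y_q = Sum.inr q`. -/
noncomputable def hibiGen (K : Type*) [Field K] (Q : Type*) [Fintype Q] [DecidableEq Q]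
    (J : Finset Q) : MvPolynomial (Q ⊕ Q) K :=
  (∏ q ∈ J, X (Sum.inl q)) * ∏ q ∈ Jᶜ, X (Sum.inr q)

/-- The Hibi ideal `H_P` of a finite poset `P`, generated by the monomials `u_𝓘` for
`𝓘` a poset ideal (lower set) of `P`. -/
noncomputable def hibiIdeal (K : Type*) [Field K] (P : Type*) [PartialOrder P] [Fintype P]
    [DecidableEq P] : Ideal (MvPolynomial (P ⊕ P) K) :=
  Ideal.span {m | ∃ J : Finset P, IsLowerSet (↑J : Set P) ∧ m = hibiGen K P J}

/-- `x^e` is a minimal monomial generator of the monomial ideal `I`, i.e. a monomial of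
`I` minimal with respect to divisibility among the monomials of `I`. -/
def IsMinGen {σ K : Type*} [Field K] (I : Ideal (MvPolynomial σ K)) (e : σ →₀ ℕ) : Prop :=
  (monomial e (1 : K) ∈ I) ∧
    ∀ e' : σ →₀ ℕ, monomial e' (1 : K) ∈ I → e' ≤ e → e' = e

/-- A monomial ideal `I` has linear quotients: its minimal monomial generating set can be
listed as `u_1, …, u_m` so that each colon ideal `(u_1,…,u_{ℓ−1}) : u_ℓ` is generated by
a subset of the variables. -/
def HasLinearQuotients {σ K : Type*} [Field K] (I : Ideal (MvPolynomial σ K)) : Prop :=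
  ∃ (m : ℕ) (u : Fin m → (σ →₀ ℕ)),
    (∀ k, IsMinGen I (u k)) ∧
    (∀ e, IsMinGen I e → ∃! k, u k = e) ∧
    ∀ ℓ : Fin m, ∃ T : Set σ,
      Submodule.colon
          (Ideal.span {p | ∃ k, k < ℓ ∧ p = monomial (u k) (1 : K)})
          (Ideal.span {monomial (u ℓ) (1 : K)})
        = Ideal.span ((fun v => (X v : MvPolynomial σ K)) '' T)

section Aux

variable {K : Type*} [Field K] {P : Type*} [PartialOrder P] [Fintype P] [DecidableEq P]

/-- Exponent vector of the Hibi generator. -/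
noncomputable def eJ (J : Finset P) : (P ⊕ P) →₀ ℕ :=
  (∑ q ∈ J, Finsupp.single (Sum.inl q) 1) + ∑ q ∈ Jᶜ, Finsupp.single (Sum.inr q) 1

lemma eJ_inl (J : Finset P) (r : P) : eJ J (Sum.inl r) = if r ∈ J then 1 else 0 := by
  classical
  simp [eJ, Finsupp.finset_sum_apply, Finsupp.single_apply]

lemma eJ_inr (J : Finset P) (r : P) : eJ J (Sum.inr r) = if r ∈ J then 0 else 1 := by
  classical
  simp [eJ, Finsupp.finset_sum_apply, Finsupp.single_apply]

lemma prodX_eq (s : Finset P) (f : P → P ⊕ P) :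
    (∏ q ∈ s, X (f q) : MvPolynomial (P ⊕ P) K)
      = monomial (∑ q ∈ s, Finsupp.single (f q) 1) 1 := by
  classical
  induction s using Finset.induction with
  | empty => simp
  | insert a s h ih =>
      rw [Finset.prod_insert h, Finset.sum_insert h, ih]
      rw [show (X (f _) : MvPolynomial (P ⊕ P) K) = monomial (Finsupp.single (f _) 1) 1 from rfl,
        monomial_mul, one_mul]

lemma hibiGen_eq (J : Finset P) : hibiGen K P J = monomial (eJ J) (1 : K) := by
  rw [hibiGen, prodX_eq, prodX_eq, monomial_mul, one_mul, eJ]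

lemma hibiIdeal_eq :
    hibiIdeal K P = Ideal.span ((fun s => monomial s (1 : K)) ''
      {d | ∃ J : Finset P, IsLowerSet (↑J : Set P) ∧ d = eJ J}) := by
  unfold hibiIdeal
  congr 1
  ext p
  constructor
  · rintro ⟨J, hJ, rfl⟩
    exact ⟨eJ J, ⟨J, hJ, rfl⟩, (hibiGen_eq J).symm⟩
  · rintro ⟨d, ⟨J, hJ, rfl⟩, rfl⟩
    exact ⟨J, hJ, (hibiGen_eq J).symm⟩

lemma eJ_le (J J' : Finset P) (h : eJ J ≤ eJ J') : J = J' := by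
  rw [Finsupp.le_def] at h
  ext r
  constructor
  · intro hr
    have := h (Sum.inl r)
    rw [eJ_inl, eJ_inl, if_pos hr] at this
    by_contra hr'
    rw [if_neg hr'] at this
    omega
  · intro hr
    have := h (Sum.inr r)
    rw [eJ_inr, eJ_inr, if_pos hr] at this
    by_contra hr'
    rw [if_neg hr'] at this
    omega

lemma eJ_inj {J J' : Finset P} (h : eJ J = eJ J') : J = J' := eJ_le J J' h.le

lemma gen_mem {J : Finset P} (hJ : IsLowerSet (↑J : Set P)) :
    monomial (eJ J) (1 : K) ∈ hibiIdeal K P := by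
  rw [← hibiGen_eq]
  exact Ideal.subset_span ⟨J, hJ, rfl⟩

lemma exists_le_of_mem (e : (P ⊕ P) →₀ ℕ) (h : monomial e (1 : K) ∈ hibiIdeal K P) :
    ∃ J : Finset P, IsLowerSet (↑J : Set P) ∧ eJ J ≤ e := by
  rw [hibiIdeal_eq, mem_ideal_span_monomial_image] at h
  obtain ⟨si, ⟨J, hJ, rfl⟩, hle⟩ := h e (by simp [support_monomial])
  exact ⟨J, hJ, hle⟩

lemma isMinGen_iff (e : (P ⊕ P) →₀ ℕ) :
    IsMinGen (hibiIdeal K P) e ↔ ∃ J : Finset P, IsLowerSet (↑J : Set P) ∧ e = eJ J := by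
  constructor
  · rintro ⟨h1, h2⟩
    obtain ⟨J, hJ, hle⟩ := exists_le_of_mem e h1
    exact ⟨J, hJ, (h2 (eJ J) (gen_mem hJ) hle).symm⟩
  · rintro ⟨J, hJ, rfl⟩
    refine ⟨gen_mem hJ, fun e' he' hle => ?_⟩
    obtain ⟨J', hJ', hle'⟩ := exists_le_of_mem e' he'
    have : J' = J := eJ_le _ _ (hle'.trans hle)
    subst this
    exact le_antisymm hle hle'

/-- in a lower set-complement situation, find a maximal element of `J` outside `J'`. -/
lemma exists_max_outside {J J' : Finset P} (hJ' : IsLowerSet (↑J' : Set P))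
    (hne : ∃ s, s ∈ J ∧ s ∉ J') :
    ∃ q, q ∈ J ∧ q ∉ J' ∧ ∀ r ∈ J, ¬ q < r := by
  classical
  obtain ⟨s, hsJ, hsJ'⟩ := hne
  obtain ⟨q, hqA, hqmax⟩ := Finset.exists_maximal (s := J.filter (fun r => s ≤ r))
    ⟨s, Finset.mem_filter.2 ⟨hsJ, le_refl s⟩⟩
  rw [Finset.mem_filter] at hqA
  refine ⟨q, hqA.1, fun hq' => hsJ' (hJ' hqA.2 hq'), fun r hr hlt => ?_⟩
  exact not_le_of_gt (α := P) hlt (hqmax (Finset.mem_filter.2 ⟨hr, hqA.2.trans (le_of_lt (α := P) hlt)⟩) (le_of_lt (α := P) hlt))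

end Aux


/-- The Hibi ideal of a finite poset has linear quotients. -/
theorem stmt14 (K : Type*) [Field K] (P : Type*) [PartialOrder P] [Fintype P]
    [DecidableEq P] :
    HasLinearQuotients (hibiIdeal K P) := by
  classical
  set l : List (Finset P) :=
    ((Finset.univ : Finset (Finset P)).toList.filter
      (fun (J : Finset P) => decide (IsLowerSet (↑J : Set P)))).mergeSort
      (fun A B : Finset P => decide (A.card ≤ B.card)) with hl
  have hmem : ∀ J : Finset P, J ∈ l ↔ IsLowerSet (↑J : Set P) := by
    intro J
    rw [hl, (List.mergeSort_perm _ _).mem_iff, List.mem_filter]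
    simp
  have hnodup : l.Nodup := by
    rw [hl]
    exact (List.mergeSort_perm _ _).symm.nodup ((Finset.nodup_toList _).filter _)
  have hsorted : ∀ i j : Fin l.length, i < j → (l.get i).card ≤ (l.get j).card := by
    have hp := List.pairwise_mergeSort (le := fun A B : Finset P => decide (A.card ≤ B.card))
      (by intro a b c hab hbc; simp at hab hbc ⊢; omega)
      (by intro a b; simpa using Nat.le_total a.card b.card)
      ((Finset.univ : Finset (Finset P)).toList.filter
        (fun (J : Finset P) => decide (IsLowerSet (↑J : Set P))))
    rw [← hl] at hp
    intro i j hij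
    have := (List.pairwise_iff_get.1 hp) i j hij
    simpa using this
  refine ⟨l.length, fun k => eJ (l.get k), ?_, ?_, ?_⟩
  · intro k
    rw [isMinGen_iff]
    exact ⟨l.get k, (hmem _).1 (l.get_mem _), rfl⟩
  · intro e he
    obtain ⟨J, hJ, rfl⟩ := (isMinGen_iff e).1 he
    obtain ⟨i, hi⟩ := List.mem_iff_get.1 ((hmem J).2 hJ)
    refine ⟨i, ?_, fun y hy => ?_⟩
    · show eJ (l.get i) = eJ J
      rw [hi]
    · have h2 : l.get y = l.get i := by rw [hi]; exact eJ_inj hy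
      exact (List.Nodup.get_inj_iff hnodup).1 h2
  · intro ℓ
    set J : Finset P := l.get ℓ with hJdef
    have hJ : IsLowerSet (↑J : Set P) := (hmem _).1 (l.get_mem _)
    refine ⟨Sum.inr '' {q | q ∈ J ∧ ∀ r ∈ J, ¬ q < r}, ?_⟩
    have hS1 : {p : MvPolynomial (P ⊕ P) K | ∃ k, k < ℓ ∧ p = monomial (eJ (l.get k)) 1}
        = (fun s => monomial s (1 : K)) '' {d | ∃ k, k < ℓ ∧ d = eJ (l.get k)} := by
      ext p
      constructor
      · rintro ⟨k, hk, rfl⟩; exact ⟨eJ (l.get k), ⟨k, hk, rfl⟩, rfl⟩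
      · rintro ⟨d, ⟨k, hk, rfl⟩, rfl⟩; exact ⟨k, hk, rfl⟩
    have hS2 : (fun v => (X v : MvPolynomial (P ⊕ P) K)) ''
          (Sum.inr '' {q | q ∈ J ∧ ∀ r ∈ J, ¬ q < r})
        = (fun s => monomial s (1 : K)) ''
          ((fun v => Finsupp.single v 1) '' (Sum.inr '' {q | q ∈ J ∧ ∀ r ∈ J, ¬ q < r})) := by
      simp only [Set.image_image]
      rfl
    rw [hS1, hS2]
    apply le_antisymm
    · -- colon ⊆ span of variables
      intro f hf
      have hf' : f * monomial (eJ J) (1 : K) ∈ Ideal.span ((fun s => monomial s (1 : K)) ''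
          {d | ∃ k, k < ℓ ∧ d = eJ (l.get k)}) := by
        have := Submodule.mem_colon.1 hf _ (Ideal.subset_span (Set.mem_singleton _))
        rwa [smul_eq_mul] at this
      rw [mem_ideal_span_monomial_image] at hf'
      rw [mem_ideal_span_monomial_image]
      intro d hd
      have hds : d + eJ J ∈ (f * monomial (eJ J) (1 : K)).support := by
        rw [mem_support_iff, coeff_mul_monomial, mul_one]
        exact mem_support_iff.1 hd
      obtain ⟨si, ⟨k, hk, rfl⟩, hle⟩ := hf' _ hds
      set J' : Finset P := l.get k with hJ'def
      have hJ' : IsLowerSet (↑J' : Set P) := (hmem _).1 (l.get_mem _)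
      have hneq : J' ≠ J := by
        intro h
        exact absurd ((List.Nodup.get_inj_iff hnodup).1 h) hk.ne
      have hcard : J'.card ≤ J.card := hsorted k ℓ hk
      have hex : ∃ s, s ∈ J ∧ s ∉ J' := by
        by_contra h
        push_neg at h
        exact hneq (Finset.eq_of_subset_of_card_le h hcard).symm
      obtain ⟨q, hqJ, hqJ', hqmax⟩ := exists_max_outside hJ' hex
      refine ⟨Finsupp.single (Sum.inr q) 1, ⟨Sum.inr q, ⟨q, ⟨hqJ, hqmax⟩, rfl⟩, rfl⟩, ?_⟩
      rw [Finsupp.single_le_iff]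
      have := (Finsupp.le_def.1 hle) (Sum.inr q)
      rw [Finsupp.add_apply, eJ_inr, eJ_inr, if_neg hqJ', if_pos hqJ] at this
      omega
    · -- span of variables ⊆ colon
      rw [Ideal.span_le]
      rintro _ ⟨s, ⟨v, ⟨q, ⟨hqJ, hqmax⟩, rfl⟩, rfl⟩, rfl⟩
      have heq : Finsupp.single (Sum.inr q) 1 + eJ J
          = eJ (J.erase q) + Finsupp.single (Sum.inl q) 1 := by
        ext v
        rcases v with r | r
        · by_cases hrq : r = q
          · subst hrq
            simp [Finsupp.single_apply, eJ_inl, hqJ, Finset.mem_erase]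
          · have h1 : (Sum.inr q : P ⊕ P) ≠ Sum.inl r := by simp
            have h2 : (Sum.inl q : P ⊕ P) ≠ Sum.inl r := by simp [Ne.symm hrq]
            by_cases hr : r ∈ J <;>
              simp [Finsupp.single_apply, eJ_inl, Finset.mem_erase, hrq, hr, h1, h2]
        · by_cases hrq : r = q
          · subst hrq
            simp [Finsupp.single_apply, eJ_inr, hqJ, Finset.mem_erase]
          · have h1 : (Sum.inr q : P ⊕ P) ≠ Sum.inr r := by simp [Ne.symm hrq]
            have h2 : (Sum.inl q : P ⊕ P) ≠ Sum.inr r := by simp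
            by_cases hr : r ∈ J <;>
              simp [Finsupp.single_apply, eJ_inr, Finset.mem_erase, hrq, hr, h1, h2]
      have hlowerJq : IsLowerSet (↑(J.erase q) : Set P) := by
        intro a b hba ha
        simp only [Finset.coe_erase, Set.mem_diff, Finset.mem_coe,
          Set.mem_singleton_iff] at ha ⊢
        have hbJ : b ∈ J := hJ hba ha.1
        refine ⟨hbJ, fun hbq => ?_⟩
        subst hbq
        rcases eq_or_lt_of_le hba with h | h
        · exact ha.2 h.symm
        · exact hqmax a ha.1 h
      obtain ⟨k, hkget⟩ := List.mem_iff_get.1 ((hmem (J.erase q)).2 hlowerJq)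
      have hcardlt : (J.erase q).card < J.card := Finset.card_erase_lt_of_mem hqJ
      have hkℓ : k < ℓ := by
        by_contra h
        push_neg at h
        rcases eq_or_lt_of_le h with h' | h'
        · rw [← h'] at hkget
          rw [← hkget, ← hJdef] at hcardlt
          exact lt_irrefl _ hcardlt
        · have := hsorted ℓ k h'
          rw [hkget, ← hJdef] at this
          omega
      apply Submodule.mem_colon.2
      intro s hs
      obtain ⟨c, rfl⟩ := Ideal.mem_span_singleton'.1 hs
      rw [smul_eq_mul, mul_left_comm]
      apply Ideal.mul_mem_left
      show (monomial (Finsupp.single (Sum.inr q) 1) (1 : K)) * monomial (eJ J) 1 ∈ _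
      have hmul : (monomial (Finsupp.single (Sum.inr q) 1) (1 : K)) * monomial (eJ J) 1
          = monomial (eJ (J.erase q)) 1 * monomial (Finsupp.single (Sum.inl q) 1) (1 : K) := by
        rw [monomial_mul, monomial_mul, heq]
      rw [hmul]
      exact Ideal.mul_mem_right _ _
        (Ideal.subset_span ⟨eJ (J.erase q), ⟨k, hkℓ, by rw [hkget]⟩, rfl⟩)
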